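/- Let l ≥ 1 be an integer and define φ⁽⁰⁾_ω(u) = ω^l · e^{−iωu} · Σ_{k=0}^l ((l+k)!/(k!·(l−k)!)) · (2iωu)^{−k} for ω ∈ ℂ \ {0} and u > 0. There exist constants C₄, C₅ > 0 depending only on l such that for all ω ∈ ℂ \ {0} and all u > 0: |φ⁽⁰⁾_ω(u)| ≤ C₄·((1+|ω|u)/u)^l · e^{u·Im ω} and |∂_ω φ⁽⁰⁾_ω(u)| ≤ C₅·((1+|ω|u)/u)^l · u · e^{u·Im ω}, where ∂_ω is the complex derivative of the holomorphic function ω ↦ φ⁽⁰⁾_ω(u) on ℂ \ {0}. -/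

import Mathlib

open Complex

/-- The initial function of the Jost iteration for angular mode `l ≥ 1`, via the closed
polynomial formula for the spherical Hankel function. -/
noncomputable def jostInit (l : ℕ) (ω : ℂ) (u : ℝ) : ℂ :=
  ω ^ l * Complex.exp (-Complex.I * ω * (u : ℂ)) *
    ∑ k ∈ Finset.range (l + 1),
      (((l + k).factorial : ℂ) / ((k.factorial : ℂ) * ((l - k).factorial : ℂ))) *
        (2 * Complex.I * ω * (u : ℂ)) ^ (-(k : ℤ))

namespace Stmt18Aux

/-- Coefficient. -/
noncomputable def c (l k : ℕ) : ℝ :=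
  ((l + k).factorial : ℝ) / ((k.factorial : ℝ) * ((l - k).factorial : ℝ))

lemma c_pos (l k : ℕ) : 0 < c l k := by
  unfold c
  positivity

/-- A globally defined version of `jostInit` (agreeing with it for `w ≠ 0`). -/
noncomputable def F (l : ℕ) (u : ℝ) (w : ℂ) : ℂ :=
  ∑ k ∈ Finset.range (l + 1),
    (c l k : ℂ) * ((2 * Complex.I * (u : ℂ)) ^ k)⁻¹ *
      (w ^ (l - k) * Complex.exp (-Complex.I * w * (u : ℂ)))

/-- Its derivative. -/
noncomputable def D (l : ℕ) (u : ℝ) (w : ℂ) : ℂ :=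
  ∑ k ∈ Finset.range (l + 1),
    (c l k : ℂ) * ((2 * Complex.I * (u : ℂ)) ^ k)⁻¹ *
      (((l - k : ℕ) : ℂ) * w ^ (l - k - 1) * Complex.exp (-Complex.I * w * (u : ℂ))
        + w ^ (l - k) * (Complex.exp (-Complex.I * w * (u : ℂ)) * (-Complex.I * (u : ℂ))))

lemma two_I_u_ne (u : ℝ) (hu : 0 < u) : (2 * Complex.I * (u : ℂ)) ≠ 0 := by
  simp [Complex.ext_iff, hu.ne']

lemma jost_eq (l : ℕ) (u : ℝ) (hu : 0 < u) (w : ℂ) (hw : w ≠ 0) :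
    jostInit l w u = F l u w := by
  unfold jostInit F
  simp only [c]
  rw [Finset.mul_sum]
  refine Finset.sum_congr rfl fun k hk => ?_
  have hk' : k ≤ l := Nat.lt_succ_iff.mp (Finset.mem_range.mp hk)
  have h2 : (2 * Complex.I * (u : ℂ)) ≠ 0 := two_I_u_ne u hu
  have hz : (2 * Complex.I * w * (u : ℂ)) ^ (-(k : ℤ)) =
      ((2 * Complex.I * (u : ℂ)) ^ k)⁻¹ * (w ^ k)⁻¹ := by
    rw [zpow_neg, zpow_natCast, ← mul_inv]
    congr 1
    rw [← mul_pow]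
    ring_nf
  rw [hz]
  have hpow : w ^ l = w ^ (l - k) * w ^ k := by
    rw [← pow_add, Nat.sub_add_cancel hk']
  rw [hpow]
  have hwk : (w : ℂ) ^ k ≠ 0 := pow_ne_zero _ hw
  have h1 : w ^ k * (w ^ k)⁻¹ = 1 := mul_inv_cancel₀ hwk
  push_cast
  linear_combination ((((l + k).factorial : ℂ) / ((k.factorial : ℂ) * ((l - k).factorial : ℂ))) *
    ((2 * Complex.I * (u : ℂ)) ^ k)⁻¹ * w ^ (l - k) *
    Complex.exp (-Complex.I * w * (u : ℂ))) * h1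

lemma hasDerivAt_F (l : ℕ) (u : ℝ) (w : ℂ) :
    HasDerivAt (F l u) (D l u w) w := by
  unfold F D
  refine HasDerivAt.fun_sum fun k hk => ?_
  have hlin : HasDerivAt (fun w : ℂ => -Complex.I * w * (u : ℂ)) (-Complex.I * (u : ℂ)) w := by
    simpa using ((hasDerivAt_id w).const_mul (-Complex.I)).mul_const (u : ℂ)
  have hexp := hlin.cexp
  have hpow := hasDerivAt_pow (l - k) w
  simpa [mul_comm, mul_left_comm, mul_assoc] using (hpow.mul hexp).const_mul
    ((c l k : ℂ) * ((2 * Complex.I * (u : ℂ)) ^ k)⁻¹)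

end Stmt18Aux

open Stmt18Aux in
theorem stmt18 (l : ℕ) (hl : 1 ≤ l) :
    ∃ C₄ : ℝ, 0 < C₄ ∧ ∃ C₅ : ℝ, 0 < C₅ ∧
      ∀ ω : ℂ, ω ≠ 0 → ∀ u : ℝ, 0 < u →
        ‖jostInit l ω u‖ ≤ C₄ * ((1 + ‖ω‖ * u) / u) ^ l * Real.exp (u * ω.im) ∧
        ‖deriv (fun w : ℂ => jostInit l w u) ω‖
          ≤ C₅ * ((1 + ‖ω‖ * u) / u) ^ l * u * Real.exp (u * ω.im) := by
  classical
  set S : ℝ := ∑ k ∈ Finset.range (l + 1), c l k with hS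
  have hSpos : 0 < S :=
    Finset.sum_pos (fun k _ => c_pos l k) ⟨0, Finset.mem_range.mpr (Nat.succ_pos l)⟩
  refine ⟨S, hSpos, (l + 1) * S, by positivity, fun ω hω u hu => ?_⟩
  set y : ℝ := (1 + ‖ω‖ * u) / u with hy
  have hypos : 0 < y := by
    apply div_pos _ hu
    positivity
  have huy : 1 ≤ u * y := by
    rw [hy, mul_div_cancel₀]
    · nlinarith [norm_nonneg ω]
    · exact hu.ne'
  have hωy : ‖ω‖ ≤ y := by
    rw [hy, le_div_iff₀ hu]
    nlinarith [norm_nonneg ω]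
  have huinv : u⁻¹ ≤ y := by
    rw [inv_le_iff_one_le_mul₀' hu]
    exact huy
  -- norm of the exponential
  have hnexp : ∀ w : ℂ, ‖Complex.exp (-Complex.I * w * (u : ℂ))‖ = Real.exp (u * w.im) := by
    intro w
    rw [Complex.norm_exp]
    congr 1
    simp [Complex.mul_re, Complex.mul_im]
    ring
  -- norm of the constant factor
  have hnA : ∀ k : ℕ, ‖((2 * Complex.I * (u : ℂ)) ^ k)⁻¹‖ = ((2 * u) ^ k)⁻¹ := by
    intro k
    rw [norm_inv, norm_pow]
    congr 2
    simp [abs_of_pos hu]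
  have hinvk : ∀ k : ℕ, ((2 * u) ^ k)⁻¹ ≤ y ^ k := by
    intro k
    have h1 : ((2 * u) ^ k)⁻¹ ≤ (u ^ k)⁻¹ := by
      apply inv_anti₀ (by positivity)
      apply pow_le_pow_left₀ (le_of_lt hu)
      nlinarith
    calc ((2 * u) ^ k)⁻¹ ≤ (u ^ k)⁻¹ := h1
      _ = (u⁻¹) ^ k := by rw [inv_pow]
      _ ≤ y ^ k := pow_le_pow_left₀ (by positivity) huinv k
  constructor
  · -- bound on jostInit
    rw [jost_eq l u hu ω hω]
    unfold F
    refine (norm_sum_le _ _).trans ?_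
    rw [show S * y ^ l * Real.exp (u * ω.im)
        = ∑ k ∈ Finset.range (l + 1), c l k * (y ^ l * Real.exp (u * ω.im)) by
      rw [← Finset.sum_mul, mul_assoc]]
    refine Finset.sum_le_sum fun k hk => ?_
    have hk' : k ≤ l := Nat.lt_succ_iff.mp (Finset.mem_range.mp hk)
    rw [norm_mul, norm_mul, norm_mul, hnexp, hnA, norm_pow]
    rw [Complex.norm_real, Real.norm_eq_abs, abs_of_pos (c_pos l k)]
    have h1 : ((2 * u) ^ k)⁻¹ * ‖ω‖ ^ (l - k) ≤ y ^ l := by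
      calc ((2 * u) ^ k)⁻¹ * ‖ω‖ ^ (l - k)
          ≤ y ^ k * y ^ (l - k) := by
            apply mul_le_mul (hinvk k) (pow_le_pow_left₀ (norm_nonneg ω) hωy _)
              (by positivity) (by positivity)
        _ = y ^ l := by rw [← pow_add, Nat.add_sub_cancel' hk']
    calc c l k * ((2 * u) ^ k)⁻¹ * (‖ω‖ ^ (l - k) * Real.exp (u * ω.im))
        = c l k * (((2 * u) ^ k)⁻¹ * ‖ω‖ ^ (l - k)) * Real.exp (u * ω.im) := by ring
      _ ≤ c l k * y ^ l * Real.exp (u * ω.im) := by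
          apply mul_le_mul_of_nonneg_right _ (Real.exp_pos _).le
          exact mul_le_mul_of_nonneg_left h1 (c_pos l k).le
      _ = c l k * (y ^ l * Real.exp (u * ω.im)) := by ring
  · -- bound on the derivative
    have hEq : (fun w : ℂ => jostInit l w u) =ᶠ[nhds ω] F l u :=
      (eventually_ne_nhds hω).mono fun w hw => jost_eq l u hu w hw
    rw [hEq.deriv_eq, (hasDerivAt_F l u ω).deriv]
    unfold D
    refine (norm_sum_le _ _).trans ?_
    rw [show (l + 1 : ℝ) * S * y ^ l * u * Real.exp (u * ω.im)
        = ∑ k ∈ Finset.range (l + 1), c l k * ((l + 1) * (u * y ^ l) * Real.exp (u * ω.im)) by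
      rw [← Finset.sum_mul]; ring]
    refine Finset.sum_le_sum fun k hk => ?_
    have hk' : k ≤ l := Nat.lt_succ_iff.mp (Finset.mem_range.mp hk)
    rw [norm_mul, norm_mul, hnA]
    rw [Complex.norm_real, Real.norm_eq_abs, abs_of_pos (c_pos l k)]
    have hinner : ‖((l - k : ℕ) : ℂ) * ω ^ (l - k - 1) * Complex.exp (-Complex.I * ω * (u : ℂ))
        + ω ^ (l - k) * (Complex.exp (-Complex.I * ω * (u : ℂ)) * (-Complex.I * (u : ℂ)))‖
        ≤ ((l - k : ℕ) * ‖ω‖ ^ (l - k - 1) + ‖ω‖ ^ (l - k) * u) * Real.exp (u * ω.im) := by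
      refine (norm_add_le _ _).trans ?_
      rw [add_mul]
      gcongr
      · rw [norm_mul, norm_mul, hnexp, norm_pow]
        refine le_of_eq ?_
        simp
      · rw [norm_mul, norm_mul, norm_mul, hnexp, norm_pow, norm_neg, Complex.norm_I,
          one_mul, Complex.norm_real, Real.norm_eq_abs, abs_of_pos hu]
        exact le_of_eq (by ring)
    have hmain : ((2 * u) ^ k)⁻¹ * (((l - k : ℕ)) * ‖ω‖ ^ (l - k - 1) + ‖ω‖ ^ (l - k) * u)
        ≤ (l + 1) * (u * y ^ l) := by
      have hB : ((2 * u) ^ k)⁻¹ * (‖ω‖ ^ (l - k) * u) ≤ u * y ^ l := by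
        calc ((2 * u) ^ k)⁻¹ * (‖ω‖ ^ (l - k) * u)
            ≤ y ^ k * (y ^ (l - k) * u) := by
              apply mul_le_mul (hinvk k) _ (by positivity) (by positivity)
              exact mul_le_mul_of_nonneg_right
                (pow_le_pow_left₀ (norm_nonneg ω) hωy _) hu.le
          _ = u * y ^ l := by rw [← mul_assoc, ← pow_add, Nat.add_sub_cancel' hk']; ring
      have hA : ((2 * u) ^ k)⁻¹ * (((l - k : ℕ)) * ‖ω‖ ^ (l - k - 1)) ≤ l * (u * y ^ l) := by
        rcases eq_or_lt_of_le hk' with rfl | hkl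
        · simp only [Nat.sub_self, Nat.cast_zero, zero_mul, mul_zero]
          exact mul_nonneg (Nat.cast_nonneg _) (mul_nonneg hu.le (pow_nonneg hypos.le _))
        · have hkl1 : k + (l - k - 1) = l - 1 := by omega
          calc ((2 * u) ^ k)⁻¹ * (((l - k : ℕ)) * ‖ω‖ ^ (l - k - 1))
              ≤ y ^ k * (l * y ^ (l - k - 1)) := by
                apply mul_le_mul (hinvk k) _ (by positivity) (by positivity)
                apply mul_le_mul _ (pow_le_pow_left₀ (norm_nonneg ω) hωy _)
                  (by positivity) (by positivity)
                exact_mod_cast Nat.cast_le.mpr (Nat.sub_le l k)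
            _ = l * y ^ (l - 1) := by
                rw [mul_left_comm, ← pow_add, hkl1]
            _ = l * (y ^ (l - 1) * 1) := by ring
            _ ≤ l * (y ^ (l - 1) * (u * y)) := by
                apply mul_le_mul_of_nonneg_left _ (Nat.cast_nonneg l)
                exact mul_le_mul_of_nonneg_left huy (by positivity)
            _ = l * (u * (y ^ (l - 1) * y)) := by ring
            _ = l * (u * y ^ l) := by
                rw [← pow_succ, Nat.sub_add_cancel hl]
      rw [mul_add, add_mul, one_mul]
      exact add_le_add hA hB
    calc c l k * ((2 * u) ^ k)⁻¹ *
          ‖((l - k : ℕ) : ℂ) * ω ^ (l - k - 1) * Complex.exp (-Complex.I * ω * (u : ℂ))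
            + ω ^ (l - k) * (Complex.exp (-Complex.I * ω * (u : ℂ)) * (-Complex.I * (u : ℂ)))‖
        ≤ c l k * ((2 * u) ^ k)⁻¹ *
            ((((l - k : ℕ)) * ‖ω‖ ^ (l - k - 1) + ‖ω‖ ^ (l - k) * u) * Real.exp (u * ω.im)) := by
          apply mul_le_mul_of_nonneg_left hinner (mul_nonneg (c_pos l k).le (by positivity))
      _ = c l k * (((2 * u) ^ k)⁻¹ * (((l - k : ℕ)) * ‖ω‖ ^ (l - k - 1) + ‖ω‖ ^ (l - k) * u))
            * Real.exp (u * ω.im) := by ring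
      _ ≤ c l k * ((l + 1) * (u * y ^ l)) * Real.exp (u * ω.im) := by
          apply mul_le_mul_of_nonneg_right _ (Real.exp_pos _).le
          exact mul_le_mul_of_nonneg_left hmain (c_pos l k).le
      _ = c l k * ((l + 1) * (u * y ^ l) * Real.exp (u * ω.im)) := by ring
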